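/- Fix a, b, C ∈ ℝ and let r(ξ) = (a + b|ξ|² + (3−b)|ξ|⁴ + (1−a)|ξ|⁶)/(1+|ξ|²)³ + C with F = (1/2)(1+|ξ|²)²·∂r/∂ξ̄. Then for every ξ = R·e^{iθ}, the surface point X(ξ) = Φ(ξ, F(ξ), r(ξ)) = (x¹ + i x², x³) is given by: x¹ + i x² = ([ (a−b+2C+2)(3+R⁴)R² − (a−b−2C)(1+3R⁴) ]·R·e^{iθ}) / (1+R²)⁴ and x³ = [ (a−C−1)R⁸ + (5a−b−2C−2)R⁶ + (6b−9)R⁴ + (5a−b+2C)R² + a + C ] / (1+R²)⁴. -/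

import Mathlib

open Complex MeasureTheory ComplexConjugate

noncomputable section

/-- Wirtinger derivative ∂/∂ξ of a complex-valued function. -/
def wd (f : ℂ → ℂ) (ξ : ℂ) : ℂ :=
  (1 / 2) * (fderiv ℝ f ξ 1 - Complex.I * fderiv ℝ f ξ Complex.I)

/-- Wirtinger derivative ∂/∂ξ̄ of a real-valued function, as a complex number. -/
def wdbarR (r : ℂ → ℝ) (ξ : ℂ) : ℂ :=
  (1 / 2) * ((fderiv ℝ r ξ 1 : ℝ) + Complex.I * (fderiv ℝ r ξ Complex.I : ℝ))

/-- F = (1/2)(1+|ξ|²)² ∂r/∂ξ̄. -/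
def Fcong (r : ℂ → ℝ) (ξ : ℂ) : ℂ :=
  (1 / 2) * ((1 + Complex.normSq ξ) ^ 2 : ℝ) * wdbarR r ξ

/-- ψ = (1+|ξ|²)² ∂/∂ξ [F/(1+|ξ|²)²] (real-valued). -/
def psiSlope (r : ℂ → ℝ) (ξ : ℂ) : ℝ :=
  (((1 + Complex.normSq ξ) ^ 2 : ℝ) *
    wd (fun z => Fcong r z / (((1 + Complex.normSq z) ^ 2 : ℝ) : ℂ)) ξ).re

/-- σ = −∂(conj F)/∂ξ. -/
def sigmaSlope (r : ℂ → ℝ) (ξ : ℂ) : ℂ :=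
  - wd (fun z => conj (Fcong r z)) ξ

/-- The round sphere area measure in the stereographic coordinate. -/
def muSphere : Measure ℂ :=
  volume.withDensity fun ξ => ENNReal.ofReal (4 / (1 + Complex.normSq ξ) ^ 2)

/-- Constant width w: r(ξ) + r(−1/conj ξ) = w for all ξ ≠ 0. -/
def ConstWidth (r : ℂ → ℝ) (w : ℝ) : Prop :=
  ∀ ξ : ℂ, ξ ≠ 0 → r ξ + r (-1 / conj ξ) = w

/-- The map `Φ : 𝕃 × ℝ → ℝ³ ≃ ℂ × ℝ` of the correspondence space. -/
def Phi (ξ η : ℂ) (r : ℝ) : ℂ × ℝ :=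
  ((2 * (η - conj η * ξ ^ 2) + 2 * ξ * ((1 + Complex.normSq ξ : ℝ) : ℂ) * (r : ℂ))
      / (((1 + Complex.normSq ξ) ^ 2 : ℝ) : ℂ),
   ((-2 * (η * conj ξ + conj η * ξ)
        + (((1 - Complex.normSq ξ * Complex.normSq ξ) * r : ℝ) : ℂ))).re
      / (1 + Complex.normSq ξ) ^ 2)

/-- Auxiliary: the support function as a function of s = |ξ|². -/
def gAux (a b C : ℝ) (s : ℝ) : ℝ :=
  (a + b * s + (3 - b) * s ^ 2 + (1 - a) * s ^ 3) / (1 + s) ^ 3 + C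

/-- Auxiliary: the derivative of `gAux`. -/
def gdAux (a b C : ℝ) (s : ℝ) : ℝ :=
  ((b + (3 - b) * (2 * s) + (1 - a) * (3 * s ^ 2)) * (1 + s) ^ 3
    - (a + b * s + (3 - b) * s ^ 2 + (1 - a) * s ^ 3) * (3 * (1 + s) ^ 2))
    / ((1 + s) ^ 3) ^ 2

lemma hasDerivAt_gAux (a b C s : ℝ) (hs : (1 : ℝ) + s ≠ 0) :
    HasDerivAt (gAux a b C) (gdAux a b C s) s := by
  have h2 : HasDerivAt (fun x : ℝ => x ^ 2) (2 * s) s := by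
    simpa using hasDerivAt_pow 2 s
  have h3 : HasDerivAt (fun x : ℝ => x ^ 3) (3 * s ^ 2) s := by
    simpa using hasDerivAt_pow 3 s
  have hP : HasDerivAt (fun x : ℝ => a + b * x + (3 - b) * x ^ 2 + (1 - a) * x ^ 3)
      (b + (3 - b) * (2 * s) + (1 - a) * (3 * s ^ 2)) s := by
    have := (((hasDerivAt_const s a).add ((hasDerivAt_id s).const_mul b)).add
      (h2.const_mul (3 - b))).add (h3.const_mul (1 - a))
    exact this.congr_deriv (by ring)
  have hD : HasDerivAt (fun x : ℝ => (1 + x) ^ 3) (3 * (1 + s) ^ 2) s := by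
    have := ((hasDerivAt_id s).const_add 1).pow 3
    exact this.congr_deriv (by simp)
  have hDne : ((1 : ℝ) + s) ^ 3 ≠ 0 := pow_ne_zero _ hs
  have := (hP.div hD hDne).add_const C
  exact this

lemma hasFDerivAt_normSq' (ξ : ℂ) :
    HasFDerivAt Complex.normSq
      ((ξ.re • Complex.reCLM + ξ.re • Complex.reCLM)
        + (ξ.im • Complex.imCLM + ξ.im • Complex.imCLM)) ξ := by
  have h1 : HasFDerivAt (fun z : ℂ => z.re) Complex.reCLM ξ := Complex.reCLM.hasFDerivAt
  have h2 : HasFDerivAt (fun z : ℂ => z.im) Complex.imCLM ξ := Complex.imCLM.hasFDerivAt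
  have h := (h1.mul h1).add (h2.mul h2)
  have hfun : Complex.normSq = fun z : ℂ => z.re * z.re + z.im * z.im := by
    funext z; exact Complex.normSq_apply z
  rw [hfun]
  exact h

lemma fderiv_r (a b C : ℝ) (r : ℂ → ℝ)
    (hr : ∀ ξ : ℂ, r ξ =
      (a + b * Complex.normSq ξ + (3 - b) * Complex.normSq ξ ^ 2
        + (1 - a) * Complex.normSq ξ ^ 3) / (1 + Complex.normSq ξ) ^ 3 + C)
    (ξ : ℂ) :
    fderiv ℝ r ξ 1 = gdAux a b C (Complex.normSq ξ) * (2 * ξ.re) ∧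
    fderiv ℝ r ξ Complex.I = gdAux a b C (Complex.normSq ξ) * (2 * ξ.im) := by
  have h0 := Complex.normSq_nonneg ξ
  have hpos : (0 : ℝ) < 1 + Complex.normSq ξ := by linarith
  have hg := hasDerivAt_gAux a b C (Complex.normSq ξ) hpos.ne'
  have hn := hasFDerivAt_normSq' ξ
  have hc := hg.comp_hasFDerivAt ξ hn
  have hre : r = gAux a b C ∘ Complex.normSq := by
    funext z; simp [hr z, gAux, Function.comp]
  have hfd : fderiv ℝ r ξ = gdAux a b C (Complex.normSq ξ) •
      ((ξ.re • Complex.reCLM + ξ.re • Complex.reCLM)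
        + (ξ.im • Complex.imCLM + ξ.im • Complex.imCLM)) := by
    rw [hre]; exact hc.fderiv
  rw [hfd]
  constructor
  · simp [Complex.reCLM_apply, Complex.imCLM_apply]; ring
  · simp [Complex.reCLM_apply, Complex.imCLM_apply]; ring

lemma wdbarR_r (a b C : ℝ) (r : ℂ → ℝ)
    (hr : ∀ ξ : ℂ, r ξ =
      (a + b * Complex.normSq ξ + (3 - b) * Complex.normSq ξ ^ 2
        + (1 - a) * Complex.normSq ξ ^ 3) / (1 + Complex.normSq ξ) ^ 3 + C)
    (ξ : ℂ) :
    wdbarR r ξ = ((gdAux a b C (Complex.normSq ξ) : ℝ) : ℂ) * ξ := by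
  obtain ⟨h1, h2⟩ := fderiv_r a b C r hr ξ
  rw [wdbarR, h1, h2]
  set G : ℝ := gdAux a b C (Complex.normSq ξ) with hG
  conv_rhs => rw [← Complex.re_add_im ξ]
  push_cast
  ring

lemma coord1 (k rv s : ℝ) (ξ : ℂ) (hcm : (starRingEnd ℂ) ξ * ξ = ((s : ℝ) : ℂ)) :
    2 * (((k : ℝ) : ℂ) * ξ - (starRingEnd ℂ) (((k : ℝ) : ℂ) * ξ) * ξ ^ 2)
      + 2 * ξ * ((1 + s : ℝ) : ℂ) * ((rv : ℝ) : ℂ)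
    = (((2 * k * (1 - s) + 2 * (1 + s) * rv : ℝ)) : ℂ) * ξ := by
  rw [map_mul, Complex.conj_ofReal]
  push_cast
  linear_combination (-2 * (k : ℂ) * ξ) * hcm

lemma coord2 (k rv s : ℝ) (ξ : ℂ) (hcm : (starRingEnd ℂ) ξ * ξ = ((s : ℝ) : ℂ))
    (hmc : ξ * (starRingEnd ℂ) ξ = ((s : ℝ) : ℂ)) :
    -2 * ((((k : ℝ) : ℂ) * ξ) * (starRingEnd ℂ) ξ + (starRingEnd ℂ) (((k : ℝ) : ℂ) * ξ) * ξ)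
      + (((1 - s * s) * rv : ℝ) : ℂ)
    = (((-4 * k * s + (1 - s * s) * rv : ℝ)) : ℂ) := by
  rw [map_mul, Complex.conj_ofReal]
  push_cast
  linear_combination (-2 * (k : ℂ)) * hmc + (-2 * (k : ℂ)) * hcm

/-- the explicit parametrization of the constant width surface of
§4.2 reconstructed from its support function via `Φ`. -/
theorem example_surface_parametrization
    (a b C : ℝ) (r : ℂ → ℝ)
    (hr : ∀ ξ : ℂ, r ξ =
      (a + b * Complex.normSq ξ + (3 - b) * Complex.normSq ξ ^ 2
        + (1 - a) * Complex.normSq ξ ^ 3) / (1 + Complex.normSq ξ) ^ 3 + C)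
    (X : ℂ → ℂ × ℝ) (hX : ∀ ξ : ℂ, X ξ = Phi ξ (Fcong r ξ) (r ξ)) :
    ∀ R θ : ℝ,
      (X ((R : ℂ) * Complex.exp (θ * Complex.I))).1
          = ((((a - b + 2 * C + 2) * (3 + R ^ 4) * R ^ 2
                - (a - b - 2 * C) * (1 + 3 * R ^ 4)) * R : ℝ) : ℂ)
              * Complex.exp (θ * Complex.I) / (((1 + R ^ 2) ^ 4 : ℝ) : ℂ) ∧
      (X ((R : ℂ) * Complex.exp (θ * Complex.I))).2
          = ((a - C - 1) * R ^ 8 + (5 * a - b - 2 * C - 2) * R ^ 6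
              + (6 * b - 9) * R ^ 4 + (5 * a - b + 2 * C) * R ^ 2 + a + C)
              / (1 + R ^ 2) ^ 4 := by
  intro R θ
  set E := Complex.exp ((θ : ℂ) * Complex.I) with hEdef
  set ξ : ℂ := (R : ℂ) * E with hξdef
  have hs : Complex.normSq ξ = R ^ 2 := by
    rw [hξdef, Complex.normSq_mul, Complex.normSq_ofReal, Complex.normSq_eq_norm_sq,
      hEdef, Complex.norm_exp_ofReal_mul_I]
    ring
  have hpos : (0 : ℝ) < 1 + R ^ 2 := by positivity
  have hne : ((1 : ℝ) + R ^ 2) ≠ 0 := hpos.ne'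
  have c2ne : ((((1 : ℝ) + R ^ 2) ^ 2 : ℝ) : ℂ) ≠ 0 := by
    exact_mod_cast pow_ne_zero 2 hne
  have c4ne : ((((1 : ℝ) + R ^ 2) ^ 4 : ℝ) : ℂ) ≠ 0 := by
    exact_mod_cast pow_ne_zero 4 hne
  set k : ℝ := (1 / 2) * (1 + R ^ 2) ^ 2 * gdAux a b C (R ^ 2) with hk
  have hF : Fcong r ξ = ((k : ℝ) : ℂ) * ξ := by
    rw [Fcong, wdbarR_r a b C r hr ξ, hs, hk]
    push_cast
    ring
  have hrξ : r ξ = (a + b * R ^ 2 + (3 - b) * (R ^ 2) ^ 2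
      + (1 - a) * (R ^ 2) ^ 3) / (1 + R ^ 2) ^ 3 + C := by
    rw [hr ξ, hs]
  have hmc : ξ * (starRingEnd ℂ) ξ = ((R ^ 2 : ℝ) : ℂ) := by
    rw [Complex.mul_conj, hs]
  have hcm : (starRingEnd ℂ) ξ * ξ = ((R ^ 2 : ℝ) : ℂ) := by
    rw [mul_comm]; exact hmc
  constructor
  · rw [hX ξ]
    simp only [Phi, hF, hs]
    rw [coord1 k (r ξ) (R ^ 2) ξ hcm]
    rw [div_eq_div_iff c2ne c4ne]
    have key : ((2 * k * (1 - R ^ 2) + 2 * (1 + R ^ 2) * (r ξ)) * R) * ((1 + R ^ 2) ^ 4)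
        = (((a - b + 2 * C + 2) * (3 + R ^ 4) * R ^ 2
            - (a - b - 2 * C) * (1 + 3 * R ^ 4)) * R) * ((1 + R ^ 2) ^ 2) := by
      rw [hrξ, hk, gdAux]
      field_simp
      ring
    calc ((2 * k * (1 - R ^ 2) + 2 * (1 + R ^ 2) * (r ξ) : ℝ) : ℂ) * ξ
          * (((1 + R ^ 2) ^ 4 : ℝ) : ℂ)
        = ((((2 * k * (1 - R ^ 2) + 2 * (1 + R ^ 2) * (r ξ)) * R) * ((1 + R ^ 2) ^ 4) : ℝ) : ℂ)
            * E := by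
          rw [hξdef]; push_cast; ring
      _ = (((((a - b + 2 * C + 2) * (3 + R ^ 4) * R ^ 2
            - (a - b - 2 * C) * (1 + 3 * R ^ 4)) * R) * ((1 + R ^ 2) ^ 2) : ℝ) : ℂ) * E := by
          rw [key]
      _ = ((((a - b + 2 * C + 2) * (3 + R ^ 4) * R ^ 2
            - (a - b - 2 * C) * (1 + 3 * R ^ 4)) * R : ℝ) : ℂ) * E
            * (((1 + R ^ 2) ^ 2 : ℝ) : ℂ) := by
          push_cast; ring
  · rw [hX ξ]
    simp only [Phi, hF, hs]
    rw [coord2 k (r ξ) (R ^ 2) ξ hcm hmc, Complex.ofReal_re]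
    rw [hrξ, hk, gdAux]
    field_simp
    ring


end
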